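/- Let ξ be a real irrational number and τ > 0. Assume there exist integer sequences (u_n) and (v_n) with u_n ≠ 0 for all n, such that u_n ξ − v_n → 0, |u_{n+1} ξ − v_{n+1}| = |u_n ξ − v_n|^{1 + o(1)}, and |u_n ξ − v_n| ≤ |u_n|^{−τ + o(1)}. Then μ(ξ) ≤ 1 + 1/τ. -/

import Mathlib

open Filter Topology

/-- The irrationality exponent of a real number, as an extended real:
the infimum of all real `μ` such that `|ξ - p/q| > 1/q^μ` for all integers `p, q`
with `q` sufficiently large (`⊤` if no such real `μ` exists). -/
noncomputable def irrationalityExponent (ξ : ℝ) : EReal :=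
  sInf {x : EReal | ∃ μ : ℝ, x = (μ : EReal) ∧
    ∀ᶠ q : ℕ in atTop, ∀ p : ℤ, |ξ - (p : ℝ) / (q : ℝ)| > 1 / (q : ℝ) ^ μ}

private lemma key_lemma (ξ : ℝ) (hξ : Irrational ξ) (τ : ℝ) (hτ : 0 < τ)
    (u v : ℕ → ℤ) (hne : ∀ n, u n ≠ 0)
    (hlim : Tendsto (fun n => (u n : ℝ) * ξ - (v n : ℝ)) atTop (𝓝 0))
    (hratio : ∃ δ : ℕ → ℝ, Tendsto δ atTop (𝓝 0) ∧ ∀ n,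
      |(u (n + 1) : ℝ) * ξ - (v (n + 1) : ℝ)| = |(u n : ℝ) * ξ - (v n : ℝ)| ^ (1 + δ n))
    (hsmall : ∃ δ : ℕ → ℝ, Tendsto δ atTop (𝓝 0) ∧ ∀ n,
      |(u n : ℝ) * ξ - (v n : ℝ)| ≤ |(u n : ℝ)| ^ (-τ + δ n))
    (μ : ℝ) (hμ : 1 + 1 / τ < μ) :
    ∀ᶠ q : ℕ in atTop, ∀ p : ℤ, |ξ - (p : ℝ) / (q : ℝ)| > 1 / (q : ℝ) ^ μ := by
  classical
  obtain ⟨δ, hδ0, hδeq⟩ := hratio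
  obtain ⟨δ', hδ'0, hδ'le⟩ := hsmall
  set ε : ℕ → ℝ := fun n => |(u n : ℝ) * ξ - (v n : ℝ)| with hεdef
  have hεpos : ∀ n, 0 < ε n := by
    intro n
    rw [hεdef]
    simp only [abs_pos]
    intro h
    apply hξ
    refine ⟨(v n : ℚ) / (u n : ℚ), ?_⟩
    have hu0 : (u n : ℝ) ≠ 0 := Int.cast_ne_zero.mpr (hne n)
    push_cast
    field_simp
    linarith [sub_eq_zero.mp h]
  have hεlim : Tendsto ε atTop (𝓝 0) := by
    simpa using hlim.abs
  -- choose η > 0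
  obtain ⟨η, hηmem, hsη, hητ, hη1⟩ :
      ∃ η : ℝ, η ∈ Set.Ioi (0:ℝ) ∧ (1+η)*(1+1/(τ-η)) < μ ∧ η < τ/2 ∧ η < 1 := by
    have hcont : ContinuousAt (fun η : ℝ => (1+η)*(1+1/(τ-η))) 0 := by
      have h1 : ContinuousAt (fun η : ℝ => τ - η) 0 := by fun_prop
      exact (continuousAt_const.add continuousAt_id).mul
        (continuousAt_const.add (continuousAt_const.div h1 (by simpa using hτ.ne')))
    have h2 : ∀ᶠ η in 𝓝 (0:ℝ), (1+η)*(1+1/(τ-η)) < μ := by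
      have htend : Tendsto (fun η : ℝ => (1+η)*(1+1/(τ-η))) (𝓝 0) (𝓝 (1+1/τ)) := by
        have h := hcont.tendsto
        convert h using 2
        norm_num
      exact htend.eventually_lt_const hμ
    have h3 : ∀ᶠ η in 𝓝 (0:ℝ), η < τ/2 := eventually_lt_nhds (by linarith)
    have h4 : ∀ᶠ η in 𝓝 (0:ℝ), η < 1 := eventually_lt_nhds one_pos
    have h5 : ∀ᶠ η in 𝓝[>] (0:ℝ),
        ((1+η)*(1+1/(τ-η)) < μ ∧ η < τ/2 ∧ η < 1) ∧ η ∈ Set.Ioi (0:ℝ) :=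
      (((h2.and (h3.and h4)).filter_mono nhdsWithin_le_nhds).and self_mem_nhdsWithin)
    obtain ⟨η, ⟨ha, hb, hc⟩, hd⟩ := h5.exists
    exact ⟨η, hd, ha, hb, hc⟩
  rw [Set.mem_Ioi] at hηmem
  have hη0 : 0 < η := hηmem
  set s : ℝ := (1+η)*(1+1/(τ-η)) with hsdef
  have hτη : 0 < τ - η := by linarith
  have hs_eq : s = (1+η) + (1+η)/(τ-η) := by
    rw [hsdef]; ring
  have hs0 : 0 < s := by
    have : 0 < (1+η)/(τ-η) := by positivity
    linarith
  -- choose N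
  have hev : ∀ᶠ n in atTop, |δ n| < η ∧ |δ' n| < η ∧ ε n < 1 := by
    have h1 : ∀ᶠ n in atTop, |δ n| < η := by
      have := hδ0.abs
      simp only [abs_zero] at this
      exact this.eventually_lt_const hη0
    have h2 : ∀ᶠ n in atTop, |δ' n| < η := by
      have := hδ'0.abs
      simp only [abs_zero] at this
      exact this.eventually_lt_const hη0
    have h3 : ∀ᶠ n in atTop, ε n < 1 := hεlim.eventually_lt_const one_pos
    exact h1.and (h2.and h3)
  obtain ⟨N, hN⟩ := eventually_atTop.mp hev
  -- eventual conditions on q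
  have hq3ev : ∀ᶠ q : ℕ in atTop, (2:ℝ)^(s+1) < (q:ℝ)^(μ - s) := by
    have h : Tendsto (fun q : ℕ => (q:ℝ)^(μ - s)) atTop atTop :=
      (tendsto_rpow_atTop (by linarith)).comp tendsto_natCast_atTop_atTop
    exact h.eventually_gt_atTop _
  have hq2ev : ∀ᶠ q : ℕ in atTop, (2*(q:ℝ))⁻¹ ≤ ε N := by
    have h : Tendsto (fun q : ℕ => (2*(q:ℝ))⁻¹) atTop (𝓝 0) := by
      apply Tendsto.comp tendsto_inv_atTop_zero
      exact (tendsto_natCast_atTop_atTop.const_mul_atTop two_pos)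
    exact (h.eventually_lt_const (hεpos N)).mono fun q hq => hq.le
  filter_upwards [hq3ev, hq2ev, eventually_ge_atTop 1] with q hq3 hq2 hq1' p
  have hQ0 : (0:ℝ) < (q:ℝ) := by exact_mod_cast hq1'
  have hQ1 : (1:ℝ) ≤ (q:ℝ) := by exact_mod_cast hq1'
  set Q : ℝ := (q:ℝ) with hQdef
  have h2Qpos : 0 < 2*Q := by linarith
  have h2Q1 : (1:ℝ) ≤ 2*Q := by linarith
  -- find minimal n
  have hex : ∃ n, N + 1 ≤ n ∧ ε n < (2*Q)⁻¹ := by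
    have h := (hεlim.eventually_lt_const (by positivity : (0:ℝ) < (2*Q)⁻¹)).and
      (eventually_ge_atTop (N+1))
    obtain ⟨n, hn1, hn2⟩ := h.exists
    exact ⟨n, hn2, hn1⟩
  set n := Nat.find hex with hndef
  obtain ⟨hnN, hεn⟩ := Nat.find_spec hex
  set m := n - 1 with hmdef
  have hmn : n = m + 1 := by omega
  have hmN : N ≤ m := by omega
  have hεm : (2*Q)⁻¹ ≤ ε m := by
    rcases Nat.lt_or_ge m (N+1) with h | h
    · have hm : m = N := by omega
      rw [hm]; exact hq2
    · by_contra hc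
      push_neg at hc
      exact Nat.find_min hex (by omega : m < n) ⟨h, hc⟩
  obtain ⟨hδm, _, _⟩ := hN m hmN
  obtain ⟨_, hδ'n, hεn1⟩ := hN n (by omega)
  have hδm' := abs_lt.mp hδm
  have hδ'n' := abs_lt.mp hδ'n
  have hεn_eq : ε n = ε m ^ (1 + δ m) := by
    rw [hmn]; exact hδeq m
  -- Step A : lower bound on ε n
  have hA : (2*Q)^(-(1+η)) ≤ ε n := by
    have c1 : (2*Q)^(-(1+η)) = ((2*Q)⁻¹)^(1+η) := by
      rw [Real.rpow_neg h2Qpos.le, ← Real.inv_rpow h2Qpos.le]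
    rw [c1, hεn_eq]
    calc ((2*Q)⁻¹)^(1+η) ≤ ((2*Q)⁻¹)^(1+δ m) :=
          Real.rpow_le_rpow_of_exponent_ge (by positivity)
            (by rw [inv_le_one_iff₀]; right; exact h2Q1) (by linarith)
      _ ≤ ε m ^ (1+δ m) := Real.rpow_le_rpow (by positivity) hεm (by linarith)
  have hεninv : (ε n)⁻¹ ≤ (2*Q)^(1+η) := by
    have := inv_anti₀ (by positivity : (0:ℝ) < (2*Q)^(-(1+η))) hA
    rwa [← Real.rpow_neg h2Qpos.le, neg_neg] at this
  -- Step B : upper bound on |u n|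
  have hu0 : (u n : ℝ) ≠ 0 := Int.cast_ne_zero.mpr (hne n)
  have hu1 : (1:ℝ) ≤ |(u n : ℝ)| := by
    have := Int.one_le_abs (hne n)
    calc (1:ℝ) ≤ ((|u n| : ℤ) : ℝ) := by exact_mod_cast this
      _ = |(u n : ℝ)| := by push_cast; ring
  have hupos : (0:ℝ) < |(u n : ℝ)| := lt_of_lt_of_le one_pos hu1
  have hτδ' : 0 < τ - δ' n := by linarith [hδ'n'.2]
  have hX : |(u n : ℝ)| ^ (τ - δ' n) ≤ (ε n)⁻¹ := by
    have h := hδ'le n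
    have he : (-τ + δ' n) = -(τ - δ' n) := by ring
    rw [he, Real.rpow_neg (abs_nonneg _)] at h
    have := inv_anti₀ (hεpos n) h
    rwa [inv_inv] at this
  have hB : |(u n : ℝ)| ≤ (2*Q) ^ ((1+η)/(τ-η)) := by
    have h1 : |(u n : ℝ)| = (|(u n : ℝ)| ^ (τ - δ' n)) ^ ((τ - δ' n)⁻¹) := by
      rw [← Real.rpow_mul (abs_nonneg _), mul_inv_cancel₀ hτδ'.ne', Real.rpow_one]
    have hεinv1 : (1:ℝ) ≤ (ε n)⁻¹ := (one_le_inv₀ (hεpos n)).mpr hεn1.le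
    calc |(u n : ℝ)| = (|(u n : ℝ)| ^ (τ - δ' n)) ^ ((τ - δ' n)⁻¹) := h1
      _ ≤ ((ε n)⁻¹) ^ ((τ - δ' n)⁻¹) :=
          Real.rpow_le_rpow (by positivity) hX (by positivity)
      _ ≤ ((ε n)⁻¹) ^ ((τ - η)⁻¹) :=
          Real.rpow_le_rpow_of_exponent_le hεinv1
            (by apply inv_anti₀ hτη; linarith [hδ'n'.1])
      _ ≤ ((2*Q)^(1+η)) ^ ((τ - η)⁻¹) :=
          Real.rpow_le_rpow (by positivity) hεninv (by positivity)
      _ = (2*Q) ^ ((1+η)/(τ-η)) := by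
          rw [← Real.rpow_mul h2Qpos.le, div_eq_mul_inv]
  -- Main lower bound
  have hmain : 2⁻¹ * (2*Q)^(-s) ≤ |ξ - (p:ℝ)/Q| := by
    by_cases hzero : (q:ℤ) * v n - u n * p = 0
    · -- the fraction equals v n / u n
      have hcast : Q * (v n : ℝ) = (u n : ℝ) * (p : ℝ) := by
        have h' : ((q:ℤ) * v n : ℤ) = (u n * p : ℤ) := by omega
        rw [hQdef]
        exact_mod_cast h'
      have hueq : (p:ℝ)/Q = (v n : ℝ)/(u n : ℝ) := by
        field_simp
        linarith [hcast]
      rw [hueq]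
      have habs : |ξ - (v n : ℝ)/(u n : ℝ)| = ε n / |(u n : ℝ)| := by
        rw [show ξ - (v n : ℝ)/(u n : ℝ) = ((u n : ℝ)*ξ - (v n : ℝ))/(u n : ℝ) by
          field_simp, abs_div]
      rw [habs]
      have hhalf : 2⁻¹ * (2*Q)^(-s) ≤ (2*Q)^(-s) := by
        have := Real.rpow_nonneg h2Qpos.le (-s)
        linarith
      calc 2⁻¹ * (2*Q)^(-s) ≤ (2*Q)^(-s) := hhalf
        _ = (2*Q)^(-(1+η)) / (2*Q)^((1+η)/(τ-η)) := by
            rw [← Real.rpow_sub h2Qpos]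
            congr 1
            rw [hs_eq]; ring
        _ ≤ ε n / |(u n : ℝ)| := div_le_div₀ (hεpos n).le hA hupos hB
    · -- nonzero integer case
      have habs1 : (1:ℝ) ≤ |Q * (v n : ℝ) - (u n : ℝ) * (p:ℝ)| := by
        have h := Int.one_le_abs hzero
        have : ((|(q:ℤ) * v n - u n * p| : ℤ) : ℝ) = |Q * (v n : ℝ) - (u n : ℝ) * (p:ℝ)| := by
          push_cast; rw [hQdef]
        rw [← this]
        exact_mod_cast h
      have hQε : Q * ε n ≤ 2⁻¹ := by
        have h1 : Q * ε n ≤ Q * (2*Q)⁻¹ := by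
          apply mul_le_mul_of_nonneg_left hεn.le hQ0.le
        have h2 : Q * (2*Q)⁻¹ = 2⁻¹ := by
          field_simp
        linarith
      have hlow : (2*|(u n : ℝ)|)⁻¹ ≤ |Q*ξ - (p:ℝ)| := by
        have hab : |(u n : ℝ)| * |Q*ξ - (p:ℝ)| ≥ 1 - Q * ε n := by
          set a : ℝ := Q * ((u n : ℝ)*ξ - (v n : ℝ)) with hadef
          set b : ℝ := Q * (v n : ℝ) - (u n : ℝ) * (p:ℝ) with hbdef
          have key : (u n : ℝ) * (Q*ξ - (p:ℝ)) = a + b := by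
            rw [hadef, hbdef]; ring
          have h1 : |(u n : ℝ)| * |Q*ξ - (p:ℝ)| = |a + b| := by
            rw [← abs_mul, key]
          have h2 : |b| - |a| ≤ |a + b| := by
            have := abs_sub (a + b) a
            have heq : |(a + b) - a| = |b| := by congr 1; ring
            linarith [heq ▸ this]
          have h3 : |a| = Q * ε n := by
            rw [hadef, abs_mul, abs_of_pos hQ0]
          rw [h1]
          rw [hbdef] at h2 ⊢
          linarith [habs1, h3 ▸ h2]
        have h12 : (2:ℝ)⁻¹ ≤ |(u n : ℝ)| * |Q*ξ - (p:ℝ)| := by linarith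
        calc (2*|(u n : ℝ)|)⁻¹ = 2⁻¹ / |(u n : ℝ)| := by
              rw [mul_inv, div_eq_mul_inv]
          _ ≤ (|(u n : ℝ)| * |Q*ξ - (p:ℝ)|) / |(u n : ℝ)| := by gcongr
          _ = |Q*ξ - (p:ℝ)| := by field_simp
      have hQξ : |ξ - (p:ℝ)/Q| = |Q*ξ - (p:ℝ)| / Q := by
        rw [show ξ - (p:ℝ)/Q = (Q*ξ - (p:ℝ))/Q by field_simp, abs_div, abs_of_pos hQ0]
      rw [hQξ]
      have h3 : 2*|(u n : ℝ)| * Q ≤ (2*Q)^s := by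
        calc 2*|(u n : ℝ)| * Q = (2*Q) * |(u n : ℝ)| := by ring
          _ ≤ (2*Q) * (2*Q)^((1+η)/(τ-η)) := mul_le_mul_of_nonneg_left hB h2Qpos.le
          _ = (2*Q)^(1 + (1+η)/(τ-η)) := by
              rw [Real.rpow_add h2Qpos, Real.rpow_one]
          _ ≤ (2*Q)^s := by
              apply Real.rpow_le_rpow_of_exponent_le h2Q1
              rw [hs_eq]; linarith
      calc 2⁻¹ * (2*Q)^(-s) ≤ (2*Q)^(-s) := by
            have := Real.rpow_nonneg h2Qpos.le (-s)
            linarith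
        _ = ((2*Q)^s)⁻¹ := by rw [Real.rpow_neg h2Qpos.le]
        _ ≤ (2*|(u n : ℝ)| * Q)⁻¹ := by
            apply inv_anti₀ (by positivity) h3
        _ = (2*|(u n : ℝ)|)⁻¹ / Q := by
            rw [mul_inv, div_eq_mul_inv]
        _ ≤ |Q*ξ - (p:ℝ)| / Q := by gcongr
  -- Final comparison
  have hfinal : 1 / Q^μ < 2⁻¹ * (2*Q)^(-s) := by
    have hQμ : (0:ℝ) < Q^μ := Real.rpow_pos_of_pos hQ0 μ
    have hexp : 2⁻¹ * (2*Q)^(-s) = 2^(-(s+1)) * Q^(-s) := by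
      rw [Real.mul_rpow (by norm_num) hQ0.le]
      rw [show (-(s+1)) = (-1) + (-s) by ring, Real.rpow_add two_pos,
        Real.rpow_neg_one]
      ring
    rw [hexp, div_lt_iff₀ hQμ]
    have h1 : Q^(-s) * Q^μ = Q^(μ - s) := by
      rw [← Real.rpow_add hQ0]; ring_nf
    have h2 : (2:ℝ)^(-(s+1)) = ((2:ℝ)^(s+1))⁻¹ := by
      rw [Real.rpow_neg (by norm_num)]
    have h2pos : (0:ℝ) < (2:ℝ)^(s+1) := Real.rpow_pos_of_pos two_pos _
    calc (1:ℝ) = ((2:ℝ)^(s+1))⁻¹ * (2:ℝ)^(s+1) := (inv_mul_cancel₀ h2pos.ne').symm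
      _ < ((2:ℝ)^(s+1))⁻¹ * Q^(μ-s) := by
          apply mul_lt_mul_of_pos_left hq3 (by positivity)
      _ = 2^(-(s+1)) * (Q^(-s) * Q^μ) := by rw [h2, h1]
      _ = 2^(-(s+1)) * Q^(-s) * Q^μ := by ring
  calc 1 / Q^μ < 2⁻¹ * (2*Q)^(-s) := hfinal
    _ ≤ |ξ - (p:ℝ)/Q| := hmain

theorem irrationality_exponent_le_one_add_inv (ξ : ℝ) (hξ : Irrational ξ) (τ : ℝ) (hτ : 0 < τ)
    (u v : ℕ → ℤ) (hne : ∀ n, u n ≠ 0)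
    (hlim : Tendsto (fun n => (u n : ℝ) * ξ - (v n : ℝ)) atTop (𝓝 0))
    (hratio : ∃ δ : ℕ → ℝ, Tendsto δ atTop (𝓝 0) ∧ ∀ n,
      |(u (n + 1) : ℝ) * ξ - (v (n + 1) : ℝ)| = |(u n : ℝ) * ξ - (v n : ℝ)| ^ (1 + δ n))
    (hsmall : ∃ δ : ℕ → ℝ, Tendsto δ atTop (𝓝 0) ∧ ∀ n,
      |(u n : ℝ) * ξ - (v n : ℝ)| ≤ |(u n : ℝ)| ^ (-τ + δ n)) :
    irrationalityExponent ξ ≤ ((1 + 1 / τ : ℝ) : EReal) := by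
  by_contra h
  push_neg at h
  obtain ⟨μ, hμ1, hμ2⟩ := EReal.exists_between_coe_real h
  have hmem : (μ : EReal) ∈ {x : EReal | ∃ μ' : ℝ, x = (μ' : EReal) ∧
      ∀ᶠ q : ℕ in atTop, ∀ p : ℤ, |ξ - (p : ℝ) / (q : ℝ)| > 1 / (q : ℝ) ^ μ'} :=
    ⟨μ, rfl, key_lemma ξ hξ τ hτ u v hne hlim hratio hsmall μ (by exact_mod_cast hμ1)⟩
  exact absurd (sInf_le hmem) (not_le.mpr hμ2)
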